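/- Let P be a self-conjugate lower prevision (a prevision) on a domain closed under negation. Then P is coherent if and only if P avoids sure loss. -/
import Mathlib


theorem prevision_coherent_iff_asl {Ω : Type*} [Fintype Ω] [Nonempty Ω]
    (K : Set (Ω → ℝ)) (P : (Ω → ℝ) → ℝ)
    (hKneg : ∀ f ∈ K, -f ∈ K)
    (hconj : ∀ f ∈ K, P f = -P (-f)) :
    (∀ (n : ℕ) (lam : Fin n → ℝ) (lam0 : ℝ) (f : Fin n → Ω → ℝ) (f0 : Ω → ℝ),
        (∀ i, 0 ≤ lam i) → 0 ≤ lam0 → (∀ i, f i ∈ K) → f0 ∈ K →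
        ∃ ω : Ω, 0 ≤ (∑ i, lam i * (f i ω - P (f i))) - lam0 * (f0 ω - P f0)) ↔
    (∀ (n : ℕ) (lam : Fin n → ℝ) (f : Fin n → Ω → ℝ),
        (∀ i, 0 ≤ lam i) → (∀ i, f i ∈ K) →
        ∃ ω : Ω, 0 ≤ ∑ i, lam i * (f i ω - P (f i))) := by
  constructor
  · intro h n lam f hlam hf
    match n with
    | 0 =>
      obtain ⟨ω⟩ := ‹Nonempty Ω›
      exact ⟨ω, by simp⟩
    | m + 1 =>
      obtain ⟨ω, hω⟩ := h (m + 1) lam 0 f (f 0) hlam le_rfl hf (hf 0)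
      exact ⟨ω, by simpa using hω⟩
  · intro h n lam lam0 f f0 hlam hlam0 hf hf0
    obtain ⟨ω, hω⟩ := h (n + 1) (Fin.snoc lam lam0) (Fin.snoc f (-f0))
      (fun i => by
        induction i using Fin.lastCases with
        | last => simpa using hlam0
        | cast i => simpa using hlam i)
      (fun i => by
        induction i using Fin.lastCases with
        | last => simpa using hKneg f0 hf0
        | cast i => simpa using hf i)
    refine ⟨ω, ?_⟩
    rw [Fin.sum_univ_castSucc] at hω
    simp only [Fin.snoc_last, Fin.snoc_castSucc] at hω
    have : P (-f0) = -P f0 := by rw [hconj f0 hf0]; ring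
    calc (0:ℝ) ≤ _ := hω
    _ = (∑ i, lam i * (f i ω - P (f i))) - lam0 * (f0 ω - P f0) := by
        rw [this]; simp; ring
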